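/- Let w₀ be the weight function of a good semigroup S ⊂ ℤ_{≥0}^r. For any ℓ, ℓ̄ ∈ ℤ_{≥0}^r with ℓ̄ ≥ 0 and ℓ̄ᵢ = 0 (i.e., i not in the support of ℓ̄): if w₀(ℓ+eᵢ) = w₀(ℓ) − 1 then w₀(ℓ+ℓ̄+eᵢ) = w₀(ℓ+ℓ̄) − 1. Equivalently, if w₀(ℓ+eᵢ) = w₀(ℓ) + 1 then w₀(ℓ−ℓ̄+eᵢ) = w₀(ℓ−ℓ̄) + 1 (whenever ℓ−ℓ̄ ≥ 0). -/
import Mathlib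


open Finset

/-- Lattice points (we work in `ℤ^r`; nonnegativity is imposed via hypotheses). -/
abbrev Pt (r : ℕ) := Fin r → ℤ

/-- The `i`-th standard basis vector. -/
def E {r : ℕ} (i : Fin r) : Pt r := Pi.single i 1

/-- `e_K = ∑_{i ∈ K} e_i`. -/
def eK {r : ℕ} (K : Finset (Fin r)) : Pt r := ∑ i ∈ K, E i

/-- `Δ̄ᵢ(ℓ) = {s ∈ S : sᵢ = ℓᵢ, sⱼ ≥ ℓⱼ ∀ j ≠ i}`. -/
def DeltaBarI {r : ℕ} (S : Set (Pt r)) (ℓ : Pt r) (i : Fin r) : Set (Pt r) :=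
  {s | s ∈ S ∧ s i = ℓ i ∧ ∀ j, j ≠ i → ℓ j ≤ s j}

/-- `Δᵢ(ℓ) = {s ∈ S : sᵢ = ℓᵢ, sⱼ > ℓⱼ ∀ j ≠ i}`. -/
def DeltaI {r : ℕ} (S : Set (Pt r)) (ℓ : Pt r) (i : Fin r) : Set (Pt r) :=
  {s | s ∈ S ∧ s i = ℓ i ∧ ∀ j, j ≠ i → ℓ j < s j}

/-- `Δ(ℓ) = ∪ᵢ Δᵢ(ℓ)`. -/
def Delta {r : ℕ} (S : Set (Pt r)) (ℓ : Pt r) : Set (Pt r) := ⋃ i, DeltaI S ℓ i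

/-- A good (local) semigroup `S ⊂ ℤ_{≥0}^r` with conductor `c`. -/
structure GoodSemigroup (r : ℕ) where
  S : Set (Pt r)
  c : Pt r
  nonneg : ∀ s ∈ S, (0 : Pt r) ≤ s
  zero_mem : (0 : Pt r) ∈ S
  add_mem : ∀ s ∈ S, ∀ t ∈ S, s + t ∈ S
  coord_zero : ∀ s ∈ S, ∀ i, s i = 0 → s = 0
  min_mem : ∀ s ∈ S, ∀ t ∈ S, s ⊓ t ∈ S
  prop3 : ∀ s ∈ S, ∀ t ∈ S, ∀ i, s i = t i →
    ∃ u ∈ S, s ⊓ t ≤ u ∧ s i < u i ∧ ∀ j, j ≠ i → s j ≠ t j → u j = (s ⊓ t) j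
  conductor_nonneg : (0 : Pt r) ≤ c
  conductor_mem : ∀ ℓ : Pt r, c ≤ ℓ → ℓ ∈ S
  conductor_min : ∀ c' : Pt r, 0 ≤ c' → (∀ ℓ, c' ≤ ℓ → ℓ ∈ S) → c ≤ c'

/-- `h` is the (combinatorial) Hilbert function of the good semigroup `G`. -/
def IsHilbert {r : ℕ} (G : GoodSemigroup r) (h : Pt r → ℤ) : Prop :=
  h 0 = 0 ∧ ∀ ℓ : Pt r, 0 ≤ ℓ → ∀ i : Fin r,
    (h (ℓ + E i) = h ℓ + 1 ↔ (DeltaBarI G.S ℓ i).Nonempty) ∧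
    (h (ℓ + E i) = h ℓ ↔ ¬ (DeltaBarI G.S ℓ i).Nonempty)

/-- `w` is the weight function of the good semigroup `G` (i.e. `w(ℓ) = 2h(ℓ) − |ℓ|`),
characterized by `w(0) = 0` and the step property. -/
def IsWeight {r : ℕ} (G : GoodSemigroup r) (w : Pt r → ℤ) : Prop :=
  w 0 = 0 ∧ ∀ ℓ : Pt r, 0 ≤ ℓ → ∀ i : Fin r,
    (w (ℓ + E i) = w ℓ + 1 ↔ (DeltaBarI G.S ℓ i).Nonempty) ∧
    (w (ℓ + E i) = w ℓ - 1 ↔ ¬ (DeltaBarI G.S ℓ i).Nonempty)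

/-- Generalized local minimum point of the weight function. -/
def GLM {r : ℕ} (w : Pt r → ℤ) (p : Pt r) : Prop :=
  0 ≤ p ∧ ∀ i : Fin r, 1 ≤ p i → w p < w (p - E i)

/-- Local minimum point of the weight function. -/
def LocMin {r : ℕ} (w : Pt r → ℤ) (p : Pt r) : Prop :=
  GLM w p ∧ ∀ i : Fin r, w p < w (p + E i)

/-- stability property of the weight function. -/
theorem stmt3 {r : ℕ} (G : GoodSemigroup r) (w : Pt r → ℤ) (hw : IsWeight G w) :
    ∀ ℓ ℓbar : Pt r, 0 ≤ ℓ → 0 ≤ ℓbar → ∀ i : Fin r, ℓbar i = 0 →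
      ((w (ℓ + E i) = w ℓ - 1 → w (ℓ + ℓbar + E i) = w (ℓ + ℓbar) - 1) ∧
       (0 ≤ ℓ - ℓbar → w (ℓ + E i) = w ℓ + 1 →
          w (ℓ - ℓbar + E i) = w (ℓ - ℓbar) + 1)) := by
  intro ℓ ℓbar hℓ hℓbar i hibar
  obtain ⟨-, hstep⟩ := hw
  constructor
  · intro hdec
    have hempty : ¬ (DeltaBarI G.S ℓ i).Nonempty := ((hstep ℓ hℓ i).2).mp hdec
    have h2 : ¬ (DeltaBarI G.S (ℓ + ℓbar) i).Nonempty := by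
      rintro ⟨s, hsS, hsi, hsj⟩
      exact hempty ⟨s, hsS, by simpa [Pi.add_apply, hibar] using hsi,
        fun j hj => le_trans (le_add_of_nonneg_right (hℓbar j)) (hsj j hj)⟩
    have hpos : (0 : Pt r) ≤ ℓ + ℓbar := fun j => add_nonneg (hℓ j) (hℓbar j)
    exact ((hstep (ℓ + ℓbar) hpos i).2).mpr h2
  · intro hpos hinc
    obtain ⟨s, hsS, hsi, hsj⟩ := ((hstep ℓ hℓ i).1).mp hinc
    have h2 : (DeltaBarI G.S (ℓ - ℓbar) i).Nonempty :=
      ⟨s, hsS, by simpa [Pi.sub_apply, hibar] using hsi,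
        fun j hj => le_trans (by simpa using sub_le_self (ℓ j) (hℓbar j)) (hsj j hj)⟩
    exact ((hstep (ℓ - ℓbar) hpos i).1).mpr h2
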